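/- Let (t_k) be a sequence of positive reals with t_k → 0, for each k let (x^k,y^k) be a Karush–Kuhn–Tucker point of the Scholtes-type regularization S(t_k), and suppose (x^k,y^k) → (x̄,ȳ) where (x̄,ȳ) is a nondegenerate T-stationary point of the regularized continuous reformulation R. Then for all sufficiently large k it holds N(y^k) ⊆ a10(x̄,ȳ) ⊆ N(y^k) ∪ H(x^k,y^k). -/

import Mathlib

open scoped Classical
open Finset Filter Topology

noncomputable section
namespace Scholtes

/-- Vectors in ℝⁿ. -/
abbrev Vec (n : ℕ) := Fin n → ℝ

variable {n : ℕ} {P Q : Type*} [Fintype P] [Fintype Q]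

/-- Euclidean dot product. -/
def dot (u v : Vec n) : ℝ := ∑ i, u i * v i

/-- Gradient: vector of partial derivatives. -/
def grad (f : Vec n → ℝ) (x : Vec n) : Vec n := fun i => fderiv ℝ f x (Pi.single i 1)

/-- Hessian bilinear form of `L` at `z`, evaluated at directions `ξ`, `ζ`. -/
def hess (L : Vec n × Vec n → ℝ) (z ξ ζ : Vec n × Vec n) : ℝ :=
  fderiv ℝ (fun w => fderiv ℝ L w ξ) z ζ

/-- The pair vector (e_i, 0) ∈ ℝ²ⁿ. -/
def ex (i : Fin n) : Vec n × Vec n := (Pi.single i 1, 0)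

/-- The pair vector (0, e_i) ∈ ℝ²ⁿ. -/
def ey (i : Fin n) : Vec n × Vec n := (0, Pi.single i 1)

/-- The pair vector (0, e) ∈ ℝ²ⁿ, where e is the all-ones vector. -/
def eAll : Vec n × Vec n := (0, fun _ => 1)

/-- The pair vector (y_i e_i, x_i e_i) ∈ ℝ²ⁿ. -/
def hvec (x y : Vec n) (i : Fin n) : Vec n × Vec n := (Pi.single i (y i), Pi.single i (x i))

/-- The number of negative eigenvalues of the bilinear form `B` restricted to the
(sub)space `T`, expressed as the maximal dimension of a linear subspace of `T` on
which the associated quadratic form is negative definite. -/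
def negIndex (B : (Vec n × Vec n) → (Vec n × Vec n) → ℝ) (T : (Vec n × Vec n) → Prop) : ℕ :=
  sSup {d : ℕ | ∃ W : Submodule ℝ (Vec n × Vec n),
    (∀ ξ ∈ W, T ξ) ∧ Module.finrank ℝ W = d ∧ ∀ ξ ∈ W, ξ ≠ 0 → B ξ ξ < 0}

/-- The data and standing assumptions of the paper: objective `f`, equality
constraints `h`, inequality constraints `g`, positive pairwise different linear
coefficients `c`, cardinality bound `s` and regularization parameter `ε`. -/
structure Setting (n : ℕ) (P Q : Type*) [Fintype P] [Fintype Q] where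
  f : Vec n → ℝ
  h : P → Vec n → ℝ
  g : Q → Vec n → ℝ
  c : Vec n
  s : ℕ
  ε : ℝ
  hn : 1 ≤ n
  hf : ContDiff ℝ 2 f
  hh : ∀ p, ContDiff ℝ 2 (h p)
  hg : ∀ q, ContDiff ℝ 2 (g q)
  hcpos : ∀ i, 0 < c i
  hcinj : Function.Injective c
  hs : s < n
  hεpos : 0 < ε
  hεle : ε ≤ 1 / ((n : ℝ) - s)

/-- Index set a01: x̄_i = 0, ȳ_i > 0. -/
def a01 (x y : Vec n) : Finset (Fin n) := univ.filter fun i => x i = 0 ∧ 0 < y i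

/-- Index set a10: x̄_i ≠ 0, ȳ_i = 0. -/
def a10 (x y : Vec n) : Finset (Fin n) := univ.filter fun i => x i ≠ 0 ∧ y i = 0

/-- Index set a00: x̄_i = 0, ȳ_i = 0. -/
def a00 (x y : Vec n) : Finset (Fin n) := univ.filter fun i => x i = 0 ∧ y i = 0

/-- Index set N(y): y_i = 0. -/
def Nact (y : Vec n) : Finset (Fin n) := univ.filter fun i => y i = 0

/-- Index set H≥(x,y): x_i y_i = −t. -/
def Hge (t : ℝ) (x y : Vec n) : Finset (Fin n) := univ.filter fun i => x i * y i = -t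

/-- Index set H≤(x,y): x_i y_i = t. -/
def Hle (t : ℝ) (x y : Vec n) : Finset (Fin n) := univ.filter fun i => x i * y i = t

/-- Index set H(x,y) = H≥ ∪ H≤. -/
def Hact (t : ℝ) (x y : Vec n) : Finset (Fin n) := Hge t x y ∪ Hle t x y

/-- Active inequality constraints Q0(x). -/
def Q0 (D : Setting n P Q) (x : Vec n) : Finset Q := univ.filter fun q => D.g q x = 0

/-- Active upper bounds E(y): y_i = 1 + ε. -/
def Eact (D : Setting n P Q) (y : Vec n) : Finset (Fin n) := univ.filter fun i => y i = 1 + D.ε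

/-- Index set O(x,y) = complement of E(y) ∪ N(y) ∪ H(x,y). -/
def Oact (D : Setting n P Q) (t : ℝ) (x y : Vec n) : Finset (Fin n) :=
  (Eact D y ∪ Nact y ∪ Hact t x y)ᶜ

/-- Feasibility for the regularized continuous reformulation R. -/
def feasR (D : Setting n P Q) (x y : Vec n) : Prop :=
  (∀ p, D.h p x = 0) ∧ (∀ q, 0 ≤ D.g q x) ∧ ((n : ℝ) - D.s ≤ ∑ i, y i) ∧
  (∀ i, x i * y i = 0) ∧ (∀ i, 0 ≤ y i ∧ y i ≤ 1 + D.ε)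

/-- Feasibility for the Scholtes-type regularization S(t). -/
def feasS (D : Setting n P Q) (t : ℝ) (x y : Vec n) : Prop :=
  (∀ p, D.h p x = 0) ∧ (∀ q, 0 ≤ D.g q x) ∧ ((n : ℝ) - D.s ≤ ∑ i, y i) ∧
  (∀ i, -t ≤ x i * y i ∧ x i * y i ≤ t) ∧ (∀ i, 0 ≤ y i ∧ y i ≤ 1 + D.ε)

/-- Multipliers for T-stationarity (defined on the whole index ranges). -/
structure TMult (n : ℕ) (P Q : Type*) where
  lam : P → ℝ
  mu1 : Q → ℝ
  mu2 : Fin n → ℝ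
  mu3 : ℝ
  sig1 : Fin n → ℝ
  sig2 : Fin n → ℝ
  rho1 : Fin n → ℝ
  rho2 : Fin n → ℝ

/-- The T-stationarity equation (1) of Definition 2. -/
def TStatEq (D : Setting n P Q) (x y : Vec n) (M : TMult n P Q) : Prop :=
  ((grad D.f x, D.c) : Vec n × Vec n) =
    (∑ p, M.lam p • ((grad (D.h p) x, (0 : Vec n)) : Vec n × Vec n))
    + (∑ q ∈ Q0 D x, M.mu1 q • ((grad (D.g q) x, (0 : Vec n)) : Vec n × Vec n))
    - (∑ i ∈ Eact D y, M.mu2 i • ey i)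
    + M.mu3 • eAll
    + (∑ i ∈ a01 x y, M.sig1 i • ex i)
    + (∑ i ∈ a10 x y, M.sig2 i • ey i)
    + (∑ i ∈ a00 x y, (M.rho1 i • ex i + M.rho2 i • ey i))

/-- (x,y) is a T-stationary point of R with multipliers M. -/
def TStatAt (D : Setting n P Q) (x y : Vec n) (M : TMult n P Q) : Prop :=
  feasR D x y ∧
  (∀ q ∈ Q0 D x, 0 ≤ M.mu1 q) ∧
  (∀ i ∈ Eact D y, 0 ≤ M.mu2 i) ∧
  0 ≤ M.mu3 ∧
  M.mu3 * ((∑ i, y i) - ((n : ℝ) - D.s)) = 0 ∧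
  (∀ i ∈ a00 x y, M.rho1 i = 0 ∨ M.rho2 i ≤ 0) ∧
  TStatEq D x y M

/-- (x,y) is a T-stationary point of R. -/
def TStat (D : Setting n P Q) (x y : Vec n) : Prop := ∃ M, TStatAt D x y M

/-- MPOC-tailored LICQ at a feasible point (x,y) of R: the indicated family of
vectors in ℝ²ⁿ is linearly independent. -/
def MPOC_LICQ (D : Setting n P Q) (x y : Vec n) : Prop :=
  ∀ (lam : P → ℝ) (mu1 : Q → ℝ) (mu2 : Fin n → ℝ) (mu3 : ℝ) (s1 s2 : Fin n → ℝ),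
    ((∑ i, y i) ≠ (n : ℝ) - D.s → mu3 = 0) →
    (∑ p, lam p • ((grad (D.h p) x, (0 : Vec n)) : Vec n × Vec n))
    + (∑ q ∈ Q0 D x, mu1 q • ((grad (D.g q) x, (0 : Vec n)) : Vec n × Vec n))
    + (∑ i ∈ Eact D y, mu2 i • ey i)
    + mu3 • eAll
    + (∑ i ∈ a01 x y ∪ a00 x y, s1 i • ex i)
    + (∑ i ∈ a10 x y ∪ a00 x y, s2 i • ey i) = 0 →
    (∀ p, lam p = 0) ∧ (∀ q ∈ Q0 D x, mu1 q = 0) ∧ (∀ i ∈ Eact D y, mu2 i = 0) ∧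
    mu3 = 0 ∧ (∀ i ∈ a01 x y ∪ a00 x y, s1 i = 0) ∧ (∀ i ∈ a10 x y ∪ a00 x y, s2 i = 0)

/-- The Lagrange function L^R associated with the T-stationary point (x̄,ȳ)
and multipliers M. -/
def LagR (D : Setting n P Q) (xb yb : Vec n) (M : TMult n P Q) (z : Vec n × Vec n) : ℝ :=
  D.f z.1 + dot D.c z.2
    - (∑ p, M.lam p * D.h p z.1)
    - (∑ q ∈ Q0 D xb, M.mu1 q * D.g q z.1)
    + (∑ i ∈ Eact D yb, M.mu2 i * (z.2 i - (1 + D.ε)))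
    - M.mu3 * ((∑ i, z.2 i) - ((n : ℝ) - D.s))
    - (∑ i ∈ a01 xb yb, M.sig1 i * z.1 i)
    - (∑ i ∈ a10 xb yb, M.sig2 i * z.2 i)
    - (∑ i ∈ a00 xb yb, (M.rho1 i * z.1 i + M.rho2 i * z.2 i))

/-- Membership in the tangent space T^R at (x̄,ȳ). -/
def inTR (D : Setting n P Q) (x y : Vec n) (ξ : Vec n × Vec n) : Prop :=
  (∀ p, dot (grad (D.h p) x) ξ.1 = 0) ∧
  (∀ q ∈ Q0 D x, dot (grad (D.g q) x) ξ.1 = 0) ∧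
  (∀ i ∈ Eact D y, ξ.2 i = 0) ∧
  ((∑ i, y i) = (n : ℝ) - D.s → (∑ i, ξ.2 i) = 0) ∧
  (∀ i ∈ a00 x y ∪ a01 x y, ξ.1 i = 0) ∧
  (∀ i ∈ a00 x y ∪ a10 x y, ξ.2 i = 0)

/-- Nondegenerate T-stationary point with multipliers M (NDT1–NDT4). -/
def NondegTStatAt (D : Setting n P Q) (x y : Vec n) (M : TMult n P Q) : Prop :=
  TStatAt D x y M ∧
  MPOC_LICQ D x y ∧
  (∀ q ∈ Q0 D x, 0 < M.mu1 q) ∧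
  (∀ i ∈ Eact D y, 0 < M.mu2 i) ∧
  ((∑ i, y i) = (n : ℝ) - D.s → 0 < M.mu3) ∧
  (∀ i ∈ a00 x y, M.rho1 i ≠ 0 ∧ M.rho2 i < 0) ∧
  (∀ ξ, inTR D x y ξ → (∀ ζ, inTR D x y ζ → hess (LagR D x y M) (x, y) ξ ζ = 0) → ξ = 0)

/-- T-index: quadratic index (number of negative eigenvalues of the restricted
Hessian of L^R) plus the biactive index |a00|. -/
def TIndex (D : Setting n P Q) (x y : Vec n) (M : TMult n P Q) : ℕ :=
  negIndex (hess (LagR D x y M) (x, y)) (inTR D x y) + (a00 x y).card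

/-- Multipliers for KKT points of S(t) (defined on the whole index ranges). -/
structure SMult (n : ℕ) (P Q : Type*) where
  lam : P → ℝ
  mu1 : Q → ℝ
  mu2 : Fin n → ℝ
  mu3 : ℝ
  etaGe : Fin n → ℝ
  etaLe : Fin n → ℝ
  nu : Fin n → ℝ

/-- The KKT equation for S(t). -/
def KKTEq (D : Setting n P Q) (t : ℝ) (x y : Vec n) (M : SMult n P Q) : Prop :=
  ((grad D.f x, D.c) : Vec n × Vec n) =
    (∑ p, M.lam p • ((grad (D.h p) x, (0 : Vec n)) : Vec n × Vec n))
    + (∑ q ∈ Q0 D x, M.mu1 q • ((grad (D.g q) x, (0 : Vec n)) : Vec n × Vec n))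
    - (∑ i ∈ Eact D y, M.mu2 i • ey i)
    + M.mu3 • eAll
    + (∑ i ∈ Hge t x y, M.etaGe i • hvec x y i)
    - (∑ i ∈ Hle t x y, M.etaLe i • hvec x y i)
    + (∑ i ∈ Nact y, M.nu i • ey i)

/-- (x,y) is a KKT point of S(t) with multipliers M. -/
def KKTAt (D : Setting n P Q) (t : ℝ) (x y : Vec n) (M : SMult n P Q) : Prop :=
  feasS D t x y ∧
  (∀ q ∈ Q0 D x, 0 ≤ M.mu1 q) ∧
  (∀ i ∈ Eact D y, 0 ≤ M.mu2 i) ∧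
  0 ≤ M.mu3 ∧
  M.mu3 * ((∑ i, y i) - ((n : ℝ) - D.s)) = 0 ∧
  (∀ i ∈ Hge t x y, 0 ≤ M.etaGe i) ∧
  (∀ i ∈ Hle t x y, 0 ≤ M.etaLe i) ∧
  (∀ i ∈ Nact y, 0 ≤ M.nu i) ∧
  KKTEq D t x y M

/-- (x,y) is a KKT point of S(t). -/
def KKT (D : Setting n P Q) (t : ℝ) (x y : Vec n) : Prop := ∃ M, KKTAt D t x y M

/-- LICQ at a feasible point (x,y) of S(t). -/
def LICQ (D : Setting n P Q) (t : ℝ) (x y : Vec n) : Prop :=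
  ∀ (lam : P → ℝ) (mu1 : Q → ℝ) (mu2 : Fin n → ℝ) (mu3 : ℝ) (eta nu : Fin n → ℝ),
    ((∑ i, y i) ≠ (n : ℝ) - D.s → mu3 = 0) →
    (∑ p, lam p • ((grad (D.h p) x, (0 : Vec n)) : Vec n × Vec n))
    + (∑ q ∈ Q0 D x, mu1 q • ((grad (D.g q) x, (0 : Vec n)) : Vec n × Vec n))
    + (∑ i ∈ Eact D y, mu2 i • ey i)
    + mu3 • eAll
    + (∑ i ∈ Hact t x y, eta i • hvec x y i)
    + (∑ i ∈ Nact y, nu i • ey i) = 0 →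
    (∀ p, lam p = 0) ∧ (∀ q ∈ Q0 D x, mu1 q = 0) ∧ (∀ i ∈ Eact D y, mu2 i = 0) ∧
    mu3 = 0 ∧ (∀ i ∈ Hact t x y, eta i = 0) ∧ (∀ i ∈ Nact y, nu i = 0)

/-- The Lagrange function L^S associated with the KKT point (x̄,ȳ) of S(t)
and multipliers M. -/
def LagS (D : Setting n P Q) (t : ℝ) (xb yb : Vec n) (M : SMult n P Q)
    (z : Vec n × Vec n) : ℝ :=
  D.f z.1 + dot D.c z.2
    - (∑ p, M.lam p * D.h p z.1)
    - (∑ q ∈ Q0 D xb, M.mu1 q * D.g q z.1)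
    + (∑ i ∈ Eact D yb, M.mu2 i * (z.2 i - (1 + D.ε)))
    - M.mu3 * ((∑ i, z.2 i) - ((n : ℝ) - D.s))
    - (∑ i ∈ Hge t xb yb, M.etaGe i * (z.1 i * z.2 i + t))
    + (∑ i ∈ Hle t xb yb, M.etaLe i * (z.1 i * z.2 i - t))
    - (∑ i ∈ Nact yb, M.nu i * z.2 i)

/-- Membership in the tangent space T^S at (x,y) for S(t). -/
def inTS (D : Setting n P Q) (t : ℝ) (x y : Vec n) (ξ : Vec n × Vec n) : Prop :=
  (∀ p, dot (grad (D.h p) x) ξ.1 = 0) ∧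
  (∀ q ∈ Q0 D x, dot (grad (D.g q) x) ξ.1 = 0) ∧
  (∀ i ∈ Eact D y, ξ.2 i = 0) ∧
  ((∑ i, y i) = (n : ℝ) - D.s → (∑ i, ξ.2 i) = 0) ∧
  (∀ i ∈ Hact t x y, y i * ξ.1 i + x i * ξ.2 i = 0) ∧
  (∀ i ∈ Nact y, ξ.2 i = 0)

/-- Nondegenerate KKT point of S(t) with multipliers M (ND1–ND3). -/
def NondegKKTAt (D : Setting n P Q) (t : ℝ) (x y : Vec n) (M : SMult n P Q) : Prop :=
  KKTAt D t x y M ∧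
  LICQ D t x y ∧
  (∀ q ∈ Q0 D x, 0 < M.mu1 q) ∧
  (∀ i ∈ Eact D y, 0 < M.mu2 i) ∧
  (∀ i ∈ Hge t x y, 0 < M.etaGe i) ∧
  (∀ i ∈ Hle t x y, 0 < M.etaLe i) ∧
  (∀ i ∈ Nact y, 0 < M.nu i) ∧
  ((∑ i, y i) = (n : ℝ) - D.s → 0 < M.mu3) ∧
  (∀ ξ, inTS D t x y ξ → (∀ ζ, inTS D t x y ζ → hess (LagS D t x y M) (x, y) ξ ζ = 0) → ξ = 0)

/-- Quadratic index of a KKT point of S(t): number of negative eigenvalues of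
the restricted Hessian of L^S. -/
def QIdx (D : Setting n P Q) (t : ℝ) (x y : Vec n) (M : SMult n P Q) : ℕ :=
  negIndex (hess (LagS D t x y M) (x, y)) (inTS D t x y)

/-! ### Auxiliary development for Statement 13 -/

section Aux

variable {n : ℕ} {P Q : Type*} [Fintype P] [Fintype Q]

/-- Bundled reduced multipliers: (λ, μ1, μ2, μ3, a, b, ν). -/
abbrev Mul7 (n : ℕ) (P Q : Type*) : Type _ :=
  (P → ℝ) × (Q → ℝ) × (Fin n → ℝ) × ℝ × (Fin n → ℝ) × (Fin n → ℝ) × (Fin n → ℝ)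

/-- The generic linear combination appearing in stationarity equations. -/
def comb (D : Setting n P Q) (x : Vec n) (L : Mul7 n P Q) : Vec n × Vec n :=
  (∑ p, L.1 p • ((grad (D.h p) x, (0 : Vec n)) : Vec n × Vec n))
  + (∑ q, L.2.1 q • ((grad (D.g q) x, (0 : Vec n)) : Vec n × Vec n))
  + (∑ i, (-(L.2.2.1 i)) • ey i)
  + L.2.2.2.1 • eAll
  + (∑ i, L.2.2.2.2.1 i • ex i)
  + (∑ i, (L.2.2.2.2.2.1 i + L.2.2.2.2.2.2 i) • ey i)

lemma smul_hvec (r : ℝ) (x y : Vec n) (i : Fin n) :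
    r • hvec x y i = (r * y i) • ex i + (r * x i) • ey i := by
  refine Prod.ext ?_ ?_ <;> funext j <;>
    simp [hvec, ex, ey, Pi.single_apply] <;> split_ifs <;> ring

/-- Reduced multipliers associated with a KKT point of S(t). -/
def reduce (D : Setting n P Q) (t : ℝ) (x y : Vec n) (M : SMult n P Q) : Mul7 n P Q :=
  (M.lam,
   fun q => if q ∈ Q0 D x then M.mu1 q else 0,
   fun i => if i ∈ Eact D y then M.mu2 i else 0,
   M.mu3,
   fun i => (if i ∈ Hge t x y then M.etaGe i * y i else 0)
      + (if i ∈ Hle t x y then -(M.etaLe i * y i) else 0),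
   fun i => (if i ∈ Hge t x y then M.etaGe i * x i else 0)
      + (if i ∈ Hle t x y then -(M.etaLe i * x i) else 0),
   fun i => if i ∈ Nact y then M.nu i else 0)

lemma reduce_eq (D : Setting n P Q) (t : ℝ) (x y : Vec n) (M : SMult n P Q)
    (h : KKTEq D t x y M) :
    ((grad D.f x, D.c) : Vec n × Vec n) = comb D x (reduce D t x y M) := by
  rw [h]
  unfold comb reduce
  have h2 : (∑ q, (if q ∈ Q0 D x then M.mu1 q else 0) •
      ((grad (D.g q) x, (0 : Vec n)) : Vec n × Vec n))
      = ∑ q ∈ Q0 D x, M.mu1 q • ((grad (D.g q) x, (0 : Vec n)) : Vec n × Vec n) := by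
    simp [ite_smul, Finset.sum_ite_mem]
  have h3 : (∑ i, (-(if i ∈ Eact D y then M.mu2 i else 0)) • ey (n := n) i)
      = -∑ i ∈ Eact D y, M.mu2 i • ey (n := n) i := by
    rw [← Finset.sum_neg_distrib]
    simp only [← neg_smul, neg_neg, ite_smul, zero_smul, neg_zero]
    simp [Finset.sum_ite_mem]
  have h5 : (∑ i, ((if i ∈ Hge t x y then M.etaGe i * y i else 0)
        + (if i ∈ Hle t x y then -(M.etaLe i * y i) else 0)) • ex (n := n) i)
      = (∑ i ∈ Hge t x y, (M.etaGe i * y i) • ex i)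
        - ∑ i ∈ Hle t x y, (M.etaLe i * y i) • ex (n := n) i := by
    simp only [add_smul, Finset.sum_add_distrib, ite_smul, zero_smul, neg_smul]
    rw [Finset.sum_ite_mem, Finset.sum_ite_mem]
    simp [Finset.univ_inter, Finset.sum_neg_distrib, sub_eq_add_neg]
  have h6 : (∑ i, ((((if i ∈ Hge t x y then M.etaGe i * x i else 0)
        + (if i ∈ Hle t x y then -(M.etaLe i * x i) else 0)))
        + (if i ∈ Nact y then M.nu i else 0)) • ey (n := n) i)
      = ((∑ i ∈ Hge t x y, (M.etaGe i * x i) • ey i)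
        - ∑ i ∈ Hle t x y, (M.etaLe i * x i) • ey (n := n) i)
        + ∑ i ∈ Nact y, M.nu i • ey (n := n) i := by
    simp only [add_smul, Finset.sum_add_distrib, ite_smul, zero_smul, neg_smul]
    rw [Finset.sum_ite_mem, Finset.sum_ite_mem, Finset.sum_ite_mem]
    simp [Finset.univ_inter, Finset.sum_neg_distrib, sub_eq_add_neg]
  have hge : (∑ i ∈ Hge t x y, M.etaGe i • hvec x y i)
      = (∑ i ∈ Hge t x y, (M.etaGe i * y i) • ex i)
        + ∑ i ∈ Hge t x y, (M.etaGe i * x i) • ey (n := n) i := by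
    rw [← Finset.sum_add_distrib]
    exact Finset.sum_congr rfl fun i _ => smul_hvec _ _ _ _
  have hle : (∑ i ∈ Hle t x y, M.etaLe i • hvec x y i)
      = (∑ i ∈ Hle t x y, (M.etaLe i * y i) • ex i)
        + ∑ i ∈ Hle t x y, (M.etaLe i * x i) • ey (n := n) i := by
    rw [← Finset.sum_add_distrib]
    exact Finset.sum_congr rfl fun i _ => smul_hvec _ _ _ _
  rw [h2, h3, h5, h6, hge, hle]
  abel

lemma mem_Hge_iff {t : ℝ} {x y : Vec n} {i : Fin n} : i ∈ Hge t x y ↔ x i * y i = -t := by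
  simp [Hge]

lemma mem_Hle_iff {t : ℝ} {x y : Vec n} {i : Fin n} : i ∈ Hle t x y ↔ x i * y i = t := by
  simp [Hle]

lemma mem_Nact_iff {y : Vec n} {i : Fin n} : i ∈ Nact y ↔ y i = 0 := by simp [Nact]

lemma mem_Eact_iff {D : Setting n P Q} {y : Vec n} {i : Fin n} :
    i ∈ Eact D y ↔ y i = 1 + D.ε := by simp [Eact]

lemma mem_Q0_iff {D : Setting n P Q} {x : Vec n} {q : Q} : q ∈ Q0 D x ↔ D.g q x = 0 := by
  simp [Q0]

lemma mem_a01_iff {x y : Vec n} {i : Fin n} : i ∈ a01 x y ↔ x i = 0 ∧ 0 < y i := by simp [a01]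

lemma mem_a10_iff {x y : Vec n} {i : Fin n} : i ∈ a10 x y ↔ x i ≠ 0 ∧ y i = 0 := by simp [a10]

lemma mem_a00_iff {x y : Vec n} {i : Fin n} : i ∈ a00 x y ↔ x i = 0 ∧ y i = 0 := by simp [a00]

/-- The per-k facts satisfied by reduced multipliers. -/
def seqFacts (D : Setting n P Q) (t : ℝ) (x y : Vec n) (L : Mul7 n P Q) : Prop :=
  (∀ q, D.g q x ≠ 0 → L.2.1 q = 0) ∧
  (∀ q, 0 ≤ L.2.1 q) ∧
  (∀ i, y i ≠ 1 + D.ε → L.2.2.1 i = 0) ∧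
  (∀ i, 0 ≤ L.2.2.1 i) ∧
  (0 ≤ L.2.2.2.1) ∧
  (L.2.2.2.1 * ((∑ i, y i) - ((n : ℝ) - D.s)) = 0) ∧
  (∀ i, L.2.2.2.2.1 i * x i = L.2.2.2.2.2.1 i * y i) ∧
  (∀ i, L.2.2.2.2.2.1 i ≤ 0) ∧
  (∀ i, (x i * y i ≠ -t ∧ x i * y i ≠ t) → L.2.2.2.2.1 i = 0 ∧ L.2.2.2.2.2.1 i = 0) ∧
  (∀ i, y i ≠ 0 → L.2.2.2.2.2.2 i = 0) ∧
  (∀ i, 0 ≤ L.2.2.2.2.2.2 i)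

lemma reduce_facts (D : Setting n P Q) {t : ℝ} (ht : 0 < t) {x y : Vec n} {M : SMult n P Q}
    (hM : KKTAt D t x y M) : seqFacts D t x y (reduce D t x y M) := by
  obtain ⟨hfeas, hmu1, hmu2, hmu3, hcompl, hge, hle, hnu, heq⟩ := hM
  have hgele : ∀ i : Fin n, i ∈ Hge t x y → i ∉ Hle t x y := by
    intro i h1 h2
    rw [mem_Hge_iff] at h1; rw [mem_Hle_iff] at h2
    rw [h1] at h2; linarith
  refine ⟨?_, ?_, ?_, ?_, hmu3, hcompl, ?_, ?_, ?_, ?_, ?_⟩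
  · intro q hq; simp [reduce, mem_Q0_iff, hq]
  · intro q; by_cases hq : q ∈ Q0 D x
    · simpa [reduce, hq] using hmu1 q hq
    · simp [reduce, hq]
  · intro i hi; simp [reduce, mem_Eact_iff, hi]
  · intro i; by_cases hi : i ∈ Eact D y
    · simpa [reduce, hi] using hmu2 i hi
    · simp [reduce, hi]
  · intro i
    by_cases h1 : i ∈ Hge t x y
    · have h2 := hgele i h1
      simp only [reduce, if_pos h1, if_neg h2, add_zero]
      ring
    · by_cases h2 : i ∈ Hle t x y
      · simp only [reduce, if_neg h1, if_pos h2, zero_add]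
        ring
      · simp [reduce, if_neg h1, if_neg h2]
  · intro i
    by_cases h1 : i ∈ Hge t x y
    · have h2 := hgele i h1
      have hx : x i ≤ 0 := by
        rcases mem_Hge_iff.mp h1 with hxy
        by_contra hc
        push_neg at hc
        nlinarith [(hfeas.2.2.2.2 i).1]
      simp only [reduce, if_pos h1, if_neg h2, add_zero]
      exact mul_nonpos_of_nonneg_of_nonpos (hge i h1) hx
    · by_cases h2 : i ∈ Hle t x y
      · have hx : 0 ≤ x i := by
          rcases mem_Hle_iff.mp h2 with hxy
          by_contra hc
          push_neg at hc
          nlinarith [(hfeas.2.2.2.2 i).1]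
        simp only [reduce, if_neg h1, if_pos h2, zero_add]
        simpa using mul_nonneg (hle i h2) hx
      · simp [reduce, if_neg h1, if_neg h2]
  · intro i hi
    have h1 : i ∉ Hge t x y := by rw [mem_Hge_iff]; exact hi.1
    have h2 : i ∉ Hle t x y := by rw [mem_Hle_iff]; exact hi.2
    simp [reduce, if_neg h1, if_neg h2]
  · intro i hi; simp [reduce, mem_Nact_iff, hi]
  · intro i; by_cases hi : i ∈ Nact y
    · simpa [reduce, hi] using hnu i hi
    · simp [reduce, hi]

lemma comb_snd (D : Setting n P Q) (x : Vec n) (L : Mul7 n P Q) (i : Fin n) :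
    (comb D x L).2 i
      = -(L.2.2.1 i) + L.2.2.2.1 + (L.2.2.2.2.2.1 i + L.2.2.2.2.2.2 i) := by
  simp [comb, ex, ey, eAll, Prod.snd_sum, Finset.sum_apply, Pi.single_apply,
    mul_ite, Finset.sum_ite_eq]

lemma comb_smul (D : Setting n P Q) (x : Vec n) (r : ℝ) (L : Mul7 n P Q) :
    comb D x (r • L) = r • comb D x L := by
  simp only [comb, Prod.smul_fst, Prod.smul_snd, Pi.smul_apply, smul_eq_mul,
    smul_add, Finset.smul_sum, smul_smul, mul_neg, mul_add]

lemma comb_sub (D : Setting n P Q) (x : Vec n) (L L' : Mul7 n P Q) :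
    comb D x (L - L') = comb D x L - comb D x L' := by
  have hns : ∀ a b : ℝ, -(a - b) = -a - -b := by intro a b; ring
  simp only [comb, Prod.fst_sub, Prod.snd_sub, Pi.sub_apply, hns, sub_add_sub_comm,
    sub_smul, Finset.sum_sub_distrib]

lemma mem_union_a01_a00 {D : Setting n P Q} {x y : Vec n} (hfeas : feasR D x y) {i : Fin n} :
    i ∈ a01 x y ∪ a00 x y ↔ x i = 0 := by
  have h0 := (hfeas.2.2.2.2 i).1
  simp only [Finset.mem_union, mem_a01_iff, mem_a00_iff]
  constructor
  · rintro (⟨h, _⟩ | ⟨h, _⟩) <;> exact h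
  · intro h
    rcases lt_or_eq_of_le h0 with hy | hy
    · exact Or.inl ⟨h, hy⟩
    · exact Or.inr ⟨h, hy.symm⟩

lemma mem_union_a10_a00 {x y : Vec n} {i : Fin n} :
    i ∈ a10 x y ∪ a00 x y ↔ y i = 0 := by
  simp only [Finset.mem_union, mem_a10_iff, mem_a00_iff]
  by_cases hx : x i = 0 <;> tauto

/-- The facts satisfied by the limit of reduced multipliers. -/
def limFacts (D : Setting n P Q) (xb yb : Vec n) (L : Mul7 n P Q) : Prop :=
  (∀ q, D.g q xb ≠ 0 → L.2.1 q = 0) ∧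
  (∀ i, yb i ≠ 1 + D.ε → L.2.2.1 i = 0) ∧
  ((∑ i, yb i) ≠ (n : ℝ) - D.s → L.2.2.2.1 = 0) ∧
  (∀ i, L.2.2.2.2.1 i * xb i = L.2.2.2.2.2.1 i * yb i) ∧
  (∀ i, yb i ≠ 0 → L.2.2.2.2.2.2 i = 0) ∧
  (0 ≤ L.2.2.2.1) ∧
  (∀ i, L.2.2.2.2.2.1 i ≤ 0) ∧
  (∀ i, 0 ≤ L.2.2.2.2.2.2 i) ∧
  (∀ i, L.2.2.2.2.2.1 i = 0 ∨ L.2.2.2.2.2.2 i = 0)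

lemma licq_consequence (D : Setting n P Q) {xb yb : Vec n} (hfeas : feasR D xb yb)
    (hlicq : MPOC_LICQ D xb yb) (L : Mul7 n P Q)
    (h1 : ∀ q, D.g q xb ≠ 0 → L.2.1 q = 0)
    (h2 : ∀ i, yb i ≠ 1 + D.ε → L.2.2.1 i = 0)
    (h3 : (∑ i, yb i) ≠ (n : ℝ) - D.s → L.2.2.2.1 = 0)
    (h4 : ∀ i, L.2.2.2.2.1 i * xb i = L.2.2.2.2.2.1 i * yb i)
    (h5 : ∀ i, yb i ≠ 0 → L.2.2.2.2.2.2 i = 0)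
    (heq : comb D xb L = 0) :
    (∀ p, L.1 p = 0) ∧ (∀ q, L.2.1 q = 0) ∧ (∀ i, L.2.2.1 i = 0) ∧ L.2.2.2.1 = 0 ∧
    (∀ i, L.2.2.2.2.1 i = 0) ∧ (∀ i, L.2.2.2.2.2.1 i + L.2.2.2.2.2.2 i = 0) := by
  have ha_off : ∀ i : Fin n, xb i ≠ 0 → L.2.2.2.2.1 i = 0 := by
    intro i hx
    have hy : yb i = 0 := by
      have := hfeas.2.2.2.1 i
      rcases mul_eq_zero.mp this with h | h
      · exact absurd h hx
      · exact h
    have := h4 i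
    rw [hy, mul_zero] at this
    exact (mul_eq_zero.mp this).resolve_right hx
  have hb_off : ∀ i : Fin n, yb i ≠ 0 → L.2.2.2.2.2.1 i = 0 := by
    intro i hy
    have hx : xb i = 0 := by
      have := hfeas.2.2.2.1 i
      rcases mul_eq_zero.mp this with h | h
      · exact h
      · exact absurd h hy
    have := h4 i
    rw [hx, mul_zero] at this
    exact (mul_eq_zero.mp this.symm).resolve_right hy
  have e2 : (∑ q, L.2.1 q • ((grad (D.g q) xb, (0 : Vec n)) : Vec n × Vec n))
      = ∑ q ∈ Q0 D xb, L.2.1 q • ((grad (D.g q) xb, (0 : Vec n)) : Vec n × Vec n) := by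
    refine (Finset.sum_subset (Finset.subset_univ _) ?_).symm
    intro q _ hq
    rw [h1 q (by simpa [mem_Q0_iff] using hq), zero_smul]
  have e3 : (∑ i, (-(L.2.2.1 i)) • ey (n := n) i)
      = ∑ i ∈ Eact D yb, (-(L.2.2.1 i)) • ey (n := n) i := by
    refine (Finset.sum_subset (Finset.subset_univ _) ?_).symm
    intro i _ hi
    rw [h2 i (by simpa [mem_Eact_iff] using hi), neg_zero, zero_smul]
  have e5 : (∑ i, L.2.2.2.2.1 i • ex (n := n) i)
      = ∑ i ∈ a01 xb yb ∪ a00 xb yb, L.2.2.2.2.1 i • ex (n := n) i := by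
    refine (Finset.sum_subset (Finset.subset_univ _) ?_).symm
    intro i _ hi
    rw [ha_off i fun h0 => hi ((mem_union_a01_a00 hfeas).mpr h0), zero_smul]
  have e6 : (∑ i, (L.2.2.2.2.2.1 i + L.2.2.2.2.2.2 i) • ey (n := n) i)
      = ∑ i ∈ a10 xb yb ∪ a00 xb yb,
          (L.2.2.2.2.2.1 i + L.2.2.2.2.2.2 i) • ey (n := n) i := by
    refine (Finset.sum_subset (Finset.subset_univ _) ?_).symm
    intro i _ hi
    have hy : yb i ≠ 0 := fun h0 => hi (mem_union_a10_a00.mpr h0)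
    rw [hb_off i hy, h5 i hy, add_zero, zero_smul]
  rw [comb, e2, e3, e5, e6] at heq
  obtain ⟨c1, c2, c3, c4, c5, c6⟩ := hlicq L.1 L.2.1 (fun i => -(L.2.2.1 i)) L.2.2.2.1
    L.2.2.2.2.1 (fun i => L.2.2.2.2.2.1 i + L.2.2.2.2.2.2 i) h3 heq
  refine ⟨c1, ?_, ?_, c4, ?_, ?_⟩
  · intro q
    by_cases hq : q ∈ Q0 D xb
    · exact c2 q hq
    · exact h1 q (by simpa [mem_Q0_iff] using hq)
  · intro i
    by_cases hi : i ∈ Eact D yb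
    · exact neg_eq_zero.mp (c3 i hi)
    · exact h2 i (by simpa [mem_Eact_iff] using hi)
  · intro i
    by_cases hi : i ∈ a01 xb yb ∪ a00 xb yb
    · exact c5 i hi
    · exact ha_off i fun h0 => hi ((mem_union_a01_a00 hfeas).mpr h0)
  · intro i
    by_cases hi : i ∈ a10 xb yb ∪ a00 xb yb
    · exact c6 i hi
    · have hy : yb i ≠ 0 := fun h0 => hi (mem_union_a10_a00.mpr h0)
      rw [hb_off i hy, h5 i hy, add_zero]

lemma grad_continuous {f : Vec n → ℝ} (hf : ContDiff ℝ 2 f) : Continuous (grad f) := by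
  have h1 : Continuous (fderiv ℝ f) := hf.continuous_fderiv (by norm_num)
  exact continuous_pi fun i => h1.clm_apply continuous_const

lemma lim_of_eventually_zero {u : ℕ → ℝ} {l : ℝ}
    (hu : Filter.Tendsto u Filter.atTop (𝓝 l)) (h0 : ∀ᶠ k in Filter.atTop, u k = 0) :
    l = 0 := by
  have h1 : Filter.Tendsto (fun _ : ℕ => (0 : ℝ)) Filter.atTop (𝓝 l) :=
    Filter.Tendsto.congr' (by filter_upwards [h0] with k hk; exact hk) hu
  exact (tendsto_nhds_unique h1 tendsto_const_nhds)

lemma tendsto_mul7 {u : ℕ → Mul7 n P Q} {L : Mul7 n P Q}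
    (h : Filter.Tendsto u Filter.atTop (𝓝 L)) :
    (∀ p, Filter.Tendsto (fun k => (u k).1 p) Filter.atTop (𝓝 (L.1 p))) ∧
    (∀ q, Filter.Tendsto (fun k => (u k).2.1 q) Filter.atTop (𝓝 (L.2.1 q))) ∧
    (∀ i, Filter.Tendsto (fun k => (u k).2.2.1 i) Filter.atTop (𝓝 (L.2.2.1 i))) ∧
    (Filter.Tendsto (fun k => (u k).2.2.2.1) Filter.atTop (𝓝 L.2.2.2.1)) ∧
    (∀ i, Filter.Tendsto (fun k => (u k).2.2.2.2.1 i) Filter.atTop (𝓝 (L.2.2.2.2.1 i))) ∧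
    (∀ i, Filter.Tendsto (fun k => (u k).2.2.2.2.2.1 i) Filter.atTop (𝓝 (L.2.2.2.2.2.1 i))) ∧
    (∀ i, Filter.Tendsto (fun k => (u k).2.2.2.2.2.2 i) Filter.atTop (𝓝 (L.2.2.2.2.2.2 i))) := by
  have h2 := (continuous_snd.tendsto L).comp h
  have h22 := (continuous_snd.tendsto L.2).comp h2
  have h222 := (continuous_snd.tendsto L.2.2).comp h22
  have h2222 := (continuous_snd.tendsto L.2.2.2).comp h222
  have h22222 := (continuous_snd.tendsto L.2.2.2.2).comp h2222
  exact ⟨fun p => ((continuous_apply p).tendsto L.1).comp ((continuous_fst.tendsto L).comp h),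
    fun q => ((continuous_apply q).tendsto L.2.1).comp ((continuous_fst.tendsto L.2).comp h2),
    fun i => ((continuous_apply i).tendsto L.2.2.1).comp ((continuous_fst.tendsto L.2.2).comp h22),
    (continuous_fst.tendsto L.2.2.2).comp h222,
    fun i => ((continuous_apply i).tendsto L.2.2.2.2.1).comp
      ((continuous_fst.tendsto L.2.2.2.2).comp h2222),
    fun i => ((continuous_apply i).tendsto L.2.2.2.2.2.1).comp
      ((continuous_fst.tendsto L.2.2.2.2.2).comp h22222),
    fun i => ((continuous_apply i).tendsto L.2.2.2.2.2.2).comp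
      ((continuous_snd.tendsto L.2.2.2.2.2).comp h22222)⟩

lemma comb_tendsto (D : Setting n P Q) {xs : ℕ → Vec n} {xb : Vec n}
    {Ls : ℕ → Mul7 n P Q} {Lb : Mul7 n P Q}
    (hx : Filter.Tendsto xs Filter.atTop (𝓝 xb))
    (hL : Filter.Tendsto Ls Filter.atTop (𝓝 Lb)) :
    Filter.Tendsto (fun k => comb D (xs k) (Ls k)) Filter.atTop (𝓝 (comb D xb Lb)) := by
  obtain ⟨hlam, hmu1, hmu2, hmu3, ha, hb, hnu⟩ := tendsto_mul7 hL
  unfold comb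
  refine Filter.Tendsto.add (Filter.Tendsto.add (Filter.Tendsto.add (Filter.Tendsto.add
    (Filter.Tendsto.add ?_ ?_) ?_) ?_) ?_) ?_
  · exact tendsto_finset_sum _ fun p _ => (hlam p).smul
      ((((grad_continuous (D.hh p)).tendsto xb).comp hx).prodMk_nhds tendsto_const_nhds)
  · exact tendsto_finset_sum _ fun q _ => (hmu1 q).smul
      ((((grad_continuous (D.hg q)).tendsto xb).comp hx).prodMk_nhds tendsto_const_nhds)
  · exact tendsto_finset_sum _ fun i _ => ((hmu2 i).neg).smul tendsto_const_nhds
  · exact hmu3.smul tendsto_const_nhds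
  · exact tendsto_finset_sum _ fun i _ => (ha i).smul tendsto_const_nhds
  · exact tendsto_finset_sum _ fun i _ => ((hb i).add (hnu i)).smul tendsto_const_nhds

lemma seqFacts_smul {D : Setting n P Q} {t : ℝ} {x y : Vec n} {L : Mul7 n P Q} {r : ℝ}
    (hr : 0 ≤ r) (hL : seqFacts D t x y L) : seqFacts D t x y (r • L) := by
  obtain ⟨f1, f2, f3, f4, f5, f6, f7, f8, f9, f10, f11⟩ := hL
  refine ⟨?_, ?_, ?_, ?_, ?_, ?_, ?_, ?_, ?_, ?_, ?_⟩ <;>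
    simp only [Prod.smul_fst, Prod.smul_snd, Pi.smul_apply, smul_eq_mul]
  · intro q hq; rw [f1 q hq, mul_zero]
  · intro q; exact mul_nonneg hr (f2 q)
  · intro i hi; rw [f3 i hi, mul_zero]
  · intro i; exact mul_nonneg hr (f4 i)
  · exact mul_nonneg hr f5
  · rw [mul_assoc, f6, mul_zero]
  · intro i; rw [mul_assoc, mul_assoc, f7 i]
  · intro i; exact mul_nonpos_of_nonneg_of_nonpos hr (f8 i)
  · intro i hi; simp [(f9 i hi).1, (f9 i hi).2]
  · intro i hi; rw [f10 i hi, mul_zero]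
  · intro i; exact mul_nonneg hr (f11 i)

/-- Reduced multipliers associated with a T-stationary point. -/
def tmul (D : Setting n P Q) (xb yb : Vec n) (M : TMult n P Q) : Mul7 n P Q :=
  (M.lam,
   fun q => if q ∈ Q0 D xb then M.mu1 q else 0,
   fun i => if i ∈ Eact D yb then M.mu2 i else 0,
   M.mu3,
   fun i => (if i ∈ a01 xb yb then M.sig1 i else 0) + (if i ∈ a00 xb yb then M.rho1 i else 0),
   fun i => if i ∈ a00 xb yb then M.rho2 i else 0,
   fun i => if i ∈ a10 xb yb then M.sig2 i else 0)

lemma tstat_comb (D : Setting n P Q) (xb yb : Vec n) (M : TMult n P Q)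
    (h : TStatEq D xb yb M) :
    ((grad D.f xb, D.c) : Vec n × Vec n) = comb D xb (tmul D xb yb M) := by
  rw [h]
  unfold comb tmul
  have h2 : (∑ q, (if q ∈ Q0 D xb then M.mu1 q else 0) •
      ((grad (D.g q) xb, (0 : Vec n)) : Vec n × Vec n))
      = ∑ q ∈ Q0 D xb, M.mu1 q • ((grad (D.g q) xb, (0 : Vec n)) : Vec n × Vec n) := by
    simp [ite_smul, Finset.sum_ite_mem]
  have h3 : (∑ i, (-(if i ∈ Eact D yb then M.mu2 i else 0)) • ey (n := n) i)
      = -∑ i ∈ Eact D yb, M.mu2 i • ey (n := n) i := by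
    rw [← Finset.sum_neg_distrib]
    simp only [← neg_smul, neg_neg, ite_smul, zero_smul, neg_zero]
    simp [Finset.sum_ite_mem]
  have h5 : (∑ i, ((if i ∈ a01 xb yb then M.sig1 i else 0)
        + (if i ∈ a00 xb yb then M.rho1 i else 0)) • ex (n := n) i)
      = (∑ i ∈ a01 xb yb, M.sig1 i • ex i) + ∑ i ∈ a00 xb yb, M.rho1 i • ex (n := n) i := by
    simp only [add_smul, Finset.sum_add_distrib, ite_smul, zero_smul]
    rw [Finset.sum_ite_mem, Finset.sum_ite_mem]
    simp [Finset.univ_inter]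
  have h6 : (∑ i, ((if i ∈ a00 xb yb then M.rho2 i else 0)
        + (if i ∈ a10 xb yb then M.sig2 i else 0)) • ey (n := n) i)
      = (∑ i ∈ a00 xb yb, M.rho2 i • ey i) + ∑ i ∈ a10 xb yb, M.sig2 i • ey (n := n) i := by
    simp only [add_smul, Finset.sum_add_distrib, ite_smul, zero_smul]
    rw [Finset.sum_ite_mem, Finset.sum_ite_mem]
    simp [Finset.univ_inter]
  have h7 : (∑ i ∈ a00 xb yb, (M.rho1 i • ex i + M.rho2 i • ey (n := n) i))
      = (∑ i ∈ a00 xb yb, M.rho1 i • ex i) + ∑ i ∈ a00 xb yb, M.rho2 i • ey (n := n) i :=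
    Finset.sum_add_distrib
  rw [h2, h3, h5, h6, h7]
  abel

lemma limit_facts (D : Setting n P Q) {t : ℕ → ℝ} (htpos : ∀ k, 0 < t k)
    {X Y : ℕ → Vec n} {xb yb : Vec n}
    (hX : Filter.Tendsto X Filter.atTop (𝓝 xb))
    (hY : Filter.Tendsto Y Filter.atTop (𝓝 yb))
    (hfeasb : feasR D xb yb)
    (Npat : ∀ i, (∀ k, Y k i = 0) ∨ (∀ k, Y k i ≠ 0))
    {LS : ℕ → Mul7 n P Q} {Lb : Mul7 n P Q}
    (hL : Filter.Tendsto LS Filter.atTop (𝓝 Lb))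
    (hfacts : ∀ k, seqFacts D (t k) (X k) (Y k) (LS k)) :
    limFacts D xb yb Lb := by
  obtain ⟨hlam, hmu1, hmu2, hmu3, ha, hb, hnu⟩ := tendsto_mul7 hL
  have hXi : ∀ i, Filter.Tendsto (fun k => X k i) Filter.atTop (𝓝 (xb i)) :=
    fun i => ((continuous_apply i).tendsto xb).comp hX
  have hYi : ∀ i, Filter.Tendsto (fun k => Y k i) Filter.atTop (𝓝 (yb i)) :=
    fun i => ((continuous_apply i).tendsto yb).comp hY
  have hbzero : ∀ i, (∀ k, Y k i = 0) → Lb.2.2.2.2.2.1 i = 0 := by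
    intro i h0
    refine lim_of_eventually_zero (hb i) (Filter.Eventually.of_forall fun k => ?_)
    refine ((hfacts k).2.2.2.2.2.2.2.2.1 i ?_).2
    rw [h0 k, mul_zero]
    constructor
    · intro hc; have := htpos k; linarith [hc]
    · intro hc; have := htpos k; linarith [hc]
  refine ⟨?_, ?_, ?_, ?_, ?_, ?_, ?_, ?_, ?_⟩
  · intro q hq
    have hgt : Filter.Tendsto (fun k => D.g q (X k)) Filter.atTop (𝓝 (D.g q xb)) :=
      (((D.hg q).continuous).tendsto xb).comp hX
    refine lim_of_eventually_zero (hmu1 q) ?_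
    filter_upwards [hgt.eventually_ne hq] with k hk
    exact (hfacts k).1 q hk
  · intro i hi
    refine lim_of_eventually_zero (hmu2 i) ?_
    filter_upwards [(hYi i).eventually_ne hi] with k hk
    exact (hfacts k).2.2.1 i hk
  · intro hne
    have hsum : Filter.Tendsto (fun k => ∑ i, Y k i) Filter.atTop (𝓝 (∑ i, yb i)) :=
      tendsto_finset_sum _ fun i _ => hYi i
    have hgt : ((n : ℝ) - D.s) < ∑ i, yb i := lt_of_le_of_ne hfeasb.2.2.1 (Ne.symm hne)
    refine lim_of_eventually_zero hmu3 ?_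
    filter_upwards [hsum.eventually (eventually_gt_nhds hgt)] with k hk
    have hc := (hfacts k).2.2.2.2.2.1
    rcases mul_eq_zero.mp hc with h | h
    · exact h
    · exfalso; linarith [sub_pos.mpr hk, h]
  · intro i
    have e1 : Filter.Tendsto (fun k => LS k |>.2.2.2.2.1 i * X k i) Filter.atTop
        (𝓝 (Lb.2.2.2.2.1 i * xb i)) := (ha i).mul (hXi i)
    have e2 : Filter.Tendsto (fun k => LS k |>.2.2.2.2.1 i * X k i) Filter.atTop
        (𝓝 (Lb.2.2.2.2.2.1 i * yb i)) := by
      refine Filter.Tendsto.congr (fun k => ((hfacts k).2.2.2.2.2.2.1 i).symm)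
        (((hb i).mul (hYi i)))
    exact tendsto_nhds_unique e1 e2
  · intro i hi
    refine lim_of_eventually_zero (hnu i) ?_
    filter_upwards [(hYi i).eventually_ne hi] with k hk
    exact (hfacts k).2.2.2.2.2.2.2.2.2.1 i hk
  · exact ge_of_tendsto' hmu3 fun k => (hfacts k).2.2.2.2.1
  · exact fun i => le_of_tendsto' (hb i) fun k => (hfacts k).2.2.2.2.2.2.2.1 i
  · exact fun i => ge_of_tendsto' (hnu i) fun k => (hfacts k).2.2.2.2.2.2.2.2.2.2 i
  · intro i
    rcases Npat i with h0 | h0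
    · exact Or.inl (hbzero i h0)
    · refine Or.inr (lim_of_eventually_zero (hnu i) (Filter.Eventually.of_forall fun k =>
        (hfacts k).2.2.2.2.2.2.2.2.2.1 i (h0 k)))

lemma feasR_limit (D : Setting n P Q) {t : ℕ → ℝ}
    (ht0 : Filter.Tendsto t Filter.atTop (𝓝 0))
    {X Y : ℕ → Vec n} {xb yb : Vec n}
    (hX : Filter.Tendsto X Filter.atTop (𝓝 xb))
    (hY : Filter.Tendsto Y Filter.atTop (𝓝 yb))
    (hfeas : ∀ k, feasS D (t k) (X k) (Y k)) : feasR D xb yb := by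
  have hXi : ∀ i, Filter.Tendsto (fun k => X k i) Filter.atTop (𝓝 (xb i)) :=
    fun i => ((continuous_apply i).tendsto xb).comp hX
  have hYi : ∀ i, Filter.Tendsto (fun k => Y k i) Filter.atTop (𝓝 (yb i)) :=
    fun i => ((continuous_apply i).tendsto yb).comp hY
  refine ⟨?_, ?_, ?_, ?_, ?_⟩
  · intro p
    exact lim_of_eventually_zero ((((D.hh p).continuous).tendsto xb).comp hX)
      (Filter.Eventually.of_forall fun k => (hfeas k).1 p)
  · intro q
    exact ge_of_tendsto' ((((D.hg q).continuous).tendsto xb).comp hX)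
      fun k => (hfeas k).2.1 q
  · exact ge_of_tendsto' (tendsto_finset_sum _ fun i _ => hYi i) fun k => (hfeas k).2.2.1
  · intro i
    have hxy : Filter.Tendsto (fun k => X k i * Y k i) Filter.atTop (𝓝 (xb i * yb i)) :=
      (hXi i).mul (hYi i)
    have h1 : xb i * yb i ≤ 0 :=
      le_of_tendsto_of_tendsto' hxy ht0 fun k => ((hfeas k).2.2.2.1 i).2
    have h2 : 0 ≤ xb i * yb i := by
      have := le_of_tendsto_of_tendsto' (ht0.neg) hxy fun k => ((hfeas k).2.2.2.1 i).1
      simpa using this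
    linarith
  · intro i
    exact ⟨ge_of_tendsto' (hYi i) fun k => ((hfeas k).2.2.2.2 i).1,
      le_of_tendsto' (hYi i) fun k => ((hfeas k).2.2.2.2 i).2⟩

lemma exists_a01_not_E (D : Setting n P Q) {xb yb : Vec n} (hfeas : feasR D xb yb)
    (hsum : (∑ i, yb i) = (n : ℝ) - D.s) :
    ∃ j ∈ a01 xb yb, yb j ≠ 1 + D.ε := by
  by_contra hc
  push_neg at hc
  have hsum2 : (∑ i, yb i) = ∑ i ∈ a01 xb yb, yb i := by
    refine (Finset.sum_subset (Finset.subset_univ _) ?_).symm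
    intro i _ hi
    by_contra hy
    have h0 := (hfeas.2.2.2.2 i).1
    have hypos : 0 < yb i := lt_of_le_of_ne h0 (Ne.symm hy)
    have hx : xb i = 0 := by
      rcases mul_eq_zero.mp (hfeas.2.2.2.1 i) with h | h
      · exact h
      · exact absurd h hy
    exact hi (mem_a01_iff.mpr ⟨hx, hypos⟩)
  have hval : (∑ i ∈ a01 xb yb, yb i) = (a01 xb yb).card * (1 + D.ε) := by
    rw [Finset.sum_congr rfl fun i hi => hc i hi, Finset.sum_const, nsmul_eq_mul]
  set m : ℕ := n - D.s with hm
  have hmcast : (m : ℝ) = (n : ℝ) - D.s := by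
    rw [hm]; push_cast [Nat.cast_sub D.hs.le]; ring
  set A : ℕ := (a01 xb yb).card with hA
  have key : (A : ℝ) * (1 + D.ε) = (m : ℝ) := by
    rw [hmcast, ← hsum, hsum2, hval]
  have hm1 : 1 ≤ m := by have hs := D.hs; omega
  have hmpos : (0 : ℝ) < m := by exact_mod_cast hm1
  have hApos : 0 < A := by
    rcases Nat.eq_zero_or_pos A with h | h
    · exfalso; rw [h] at key; simp at key; linarith
    · exact h
  have hAlt : A < m := by
    by_contra hc2
    push_neg at hc2
    have : (m : ℝ) ≤ A := by exact_mod_cast hc2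
    have hA1 : (1 : ℝ) ≤ A := by exact_mod_cast hApos
    nlinarith [D.hεpos]
  have hAle : (A : ℝ) ≤ (m : ℝ) - 1 := by
    have : A + 1 ≤ m := hAlt
    have := (Nat.cast_le (α := ℝ)).mpr this
    push_cast at this
    linarith
  have hεle : D.ε * (m : ℝ) ≤ 1 := by
    have := D.hεle
    rw [← hmcast] at this
    calc D.ε * (m : ℝ) ≤ (1 / (m : ℝ)) * m := by
          apply mul_le_mul_of_nonneg_right this hmpos.le
      _ = 1 := by field_simp
  have hA0 : (0 : ℝ) ≤ A := by positivity
  nlinarith [key, hA0, hmpos, hAle, hεle, D.hεpos]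

lemma engine (D : Setting n P Q) (t : ℕ → ℝ) (htpos : ∀ k, 0 < t k)
    (X Y : ℕ → Vec n) (hK : ∀ k, KKT D (t k) (X k) (Y k))
    (xb yb : Vec n)
    (hX : Filter.Tendsto X Filter.atTop (𝓝 xb))
    (hY : Filter.Tendsto Y Filter.atTop (𝓝 yb))
    (hfeasb : feasR D xb yb) (hlicq : MPOC_LICQ D xb yb)
    (φ : ℕ → ℕ) (hφ : StrictMono φ) :
    ∃ (ψ : ℕ → ℕ) (LS : ℕ → Mul7 n P Q) (Lb : Mul7 n P Q), StrictMono ψ ∧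
      (∀ k, seqFacts D (t (φ (ψ k))) (X (φ (ψ k))) (Y (φ (ψ k))) (LS k)) ∧
      (∀ k, ((grad D.f (X (φ (ψ k))), D.c) : Vec n × Vec n) = comb D (X (φ (ψ k))) (LS k)) ∧
      Filter.Tendsto LS Filter.atTop (𝓝 Lb) ∧
      limFacts D xb yb Lb ∧
      ((grad D.f xb, D.c) : Vec n × Vec n) = comb D xb Lb := by
  choose M hM using hK
  -- extract a subsequence on which the pattern of zero components of Y is constant
  obtain ⟨sb, hsb⟩ : ∃ sb : Fin n → Bool,
      ∃ᶠ m in Filter.atTop, (fun i => decide (Y (φ m) i = 0)) = sb := by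
    by_contra hcon
    push_neg at hcon
    have h1 : ∀ᶠ m in Filter.atTop, ∀ sb : Fin n → Bool,
        (fun i => decide (Y (φ m) i = 0)) ≠ sb :=
      Filter.eventually_all.mpr fun sb => hcon sb
    obtain ⟨m, hm⟩ := h1.exists
    exact hm _ rfl
  obtain ⟨ψ0, hψ0, hpat⟩ := Filter.extraction_of_frequently_atTop hsb
  set φ1 : ℕ → ℕ := φ ∘ ψ0 with hφ1def
  have hφ1 : StrictMono φ1 := hφ.comp hψ0
  have Npat1 : ∀ i, (∀ m, Y (φ1 m) i = 0) ∨ (∀ m, Y (φ1 m) i ≠ 0) := by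
    intro i
    cases hsi : sb i with
    | true =>
        left; intro m
        have h := congrFun (hpat m) i
        rw [hsi] at h
        exact of_decide_eq_true h
    | false =>
        right; intro m
        have h := congrFun (hpat m) i
        rw [hsi] at h
        exact of_decide_eq_false h
  set V : ℕ → Mul7 n P Q :=
    fun m => reduce D (t (φ1 m)) (X (φ1 m)) (Y (φ1 m)) (M (φ1 m)) with hVdef
  have hVfacts : ∀ m, seqFacts D (t (φ1 m)) (X (φ1 m)) (Y (φ1 m)) (V m) :=
    fun m => reduce_facts D (htpos _) (hM _)
  have hVeq : ∀ m, ((grad D.f (X (φ1 m)), D.c) : Vec n × Vec n)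
      = comb D (X (φ1 m)) (V m) :=
    fun m => reduce_eq D _ _ _ _ (hM (φ1 m)).2.2.2.2.2.2.2.2
  have hbound : ∃ C, ∀ m, ‖V m‖ ≤ C := by
    by_contra hcon
    push_neg at hcon
    have hfreq : ∀ j : ℕ, ∃ᶠ m in Filter.atTop, (j : ℝ) < ‖V m‖ := by
      intro j
      rw [Filter.frequently_atTop]
      intro K
      obtain ⟨m, hm⟩ := hcon (max (j : ℝ)
        ((Finset.range (K + 1)).sup' (by simp) fun m => ‖V m‖))
      refine ⟨m, ?_, lt_of_le_of_lt (le_max_left _ _) hm⟩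
      by_contra hc2
      push_neg at hc2
      have hmem : m ∈ Finset.range (K + 1) := Finset.mem_range.mpr (by omega)
      have h1 : ‖V m‖ ≤ (Finset.range (K + 1)).sup' (by simp) fun m => ‖V m‖ :=
        Finset.le_sup' (f := fun m => ‖V m‖) hmem
      have h2 := lt_of_le_of_lt (le_max_right (j : ℝ) _) hm
      linarith
    obtain ⟨ψ1, hψ1, hbig⟩ := Filter.extraction_forall_of_frequently hfreq
    have hVpos : ∀ j, 0 < ‖V (ψ1 j)‖ :=
      fun j => lt_of_le_of_lt (Nat.cast_nonneg j) (hbig j)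
    set r : ℕ → ℝ := fun j => ‖V (ψ1 j)‖⁻¹ with hrdef
    have hrpos : ∀ j, 0 < r j := fun j => inv_pos.mpr (hVpos j)
    have hrlim : Filter.Tendsto r Filter.atTop (𝓝 0) :=
      tendsto_inv_atTop_zero.comp
        (tendsto_atTop_mono (fun j => (hbig j).le) tendsto_natCast_atTop_atTop)
    set u : ℕ → Mul7 n P Q := fun j => r j • V (ψ1 j) with hudef
    have hunorm : ∀ j, ‖u j‖ = 1 := by
      intro j
      simp only [hudef, norm_smul, Real.norm_eq_abs, abs_of_pos (hrpos j), hrdef]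
      rw [abs_of_pos (inv_pos.mpr (hVpos j))]
      exact inv_mul_cancel₀ (ne_of_gt (hVpos j))
    obtain ⟨Lu, -, ψ2, hψ2, hLu⟩ := tendsto_subseq_of_bounded
      (Metric.isBounded_closedBall (x := (0 : Mul7 n P Q)) (r := 1)) (x := u)
      (fun j => by simp [Metric.mem_closedBall, dist_zero_right, (hunorm j).le])
    set σ : ℕ → ℕ := fun j => φ1 (ψ1 (ψ2 j)) with hσdef
    have hσ : StrictMono σ := hφ1.comp (hψ1.comp hψ2)
    have hXσ : Filter.Tendsto (fun j => X (σ j)) Filter.atTop (𝓝 xb) :=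
      hX.comp hσ.tendsto_atTop
    have hYσ : Filter.Tendsto (fun j => Y (σ j)) Filter.atTop (𝓝 yb) :=
      hY.comp hσ.tendsto_atTop
    have hfacts2 : ∀ j, seqFacts D (t (σ j)) (X (σ j)) (Y (σ j)) ((u ∘ ψ2) j) :=
      fun j => seqFacts_smul (hrpos _).le (hVfacts _)
    have hNσ : ∀ i, (∀ j, Y (σ j) i = 0) ∨ (∀ j, Y (σ j) i ≠ 0) :=
      fun i => (Npat1 i).imp (fun h j => h _) (fun h j => h _)
    have hlimf := limit_facts D (fun j => htpos (σ j)) hXσ hYσ hfeasb hNσ hLu hfacts2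
    have heqj : ∀ j, r (ψ2 j) • ((grad D.f (X (σ j)), D.c) : Vec n × Vec n)
        = comb D (X (σ j)) ((u ∘ ψ2) j) := by
      intro j
      have h1 : ((u ∘ ψ2) j) = r (ψ2 j) • V (ψ1 (ψ2 j)) := rfl
      rw [h1, comb_smul, ← hVeq (ψ1 (ψ2 j))]
    have hL1 : Filter.Tendsto
        (fun j => r (ψ2 j) • ((grad D.f (X (σ j)), D.c) : Vec n × Vec n))
        Filter.atTop (𝓝 0) := by
      have h1 : Filter.Tendsto (fun j => r (ψ2 j)) Filter.atTop (𝓝 0) :=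
        hrlim.comp hψ2.tendsto_atTop
      have h2 : Filter.Tendsto
          (fun j => ((grad D.f (X (σ j)), D.c) : Vec n × Vec n)) Filter.atTop
          (𝓝 ((grad D.f xb, D.c) : Vec n × Vec n)) :=
        (((grad_continuous D.hf).tendsto xb).comp hXσ).prodMk_nhds tendsto_const_nhds
      have h3 := h1.smul h2
      simpa using h3
    have hL2 : Filter.Tendsto (fun j => comb D (X (σ j)) ((u ∘ ψ2) j))
        Filter.atTop (𝓝 (comb D xb Lu)) := comb_tendsto D hXσ hLu
    have hzero : comb D xb Lu = 0 :=
      (tendsto_nhds_unique (hL1.congr heqj) hL2).symm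
    obtain ⟨c1, c2, c3, c4, c5, c6⟩ := licq_consequence D hfeasb hlicq Lu
      hlimf.1 hlimf.2.1 hlimf.2.2.1 hlimf.2.2.2.1 hlimf.2.2.2.2.1 hzero
    have hbnu : ∀ i, Lu.2.2.2.2.2.1 i = 0 ∧ Lu.2.2.2.2.2.2 i = 0 := by
      intro i
      rcases hlimf.2.2.2.2.2.2.2.2 i with h | h
      · exact ⟨h, by have := c6 i; linarith⟩
      · exact ⟨by have := c6 i; linarith, h⟩
    have hLu0 : Lu = 0 :=
      Prod.ext (funext c1) (Prod.ext (funext c2) (Prod.ext (funext c3)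
        (Prod.ext c4 (Prod.ext (funext c5) (Prod.ext
          (funext fun i => (hbnu i).1) (funext fun i => (hbnu i).2))))))
    have hone : ‖Lu‖ = 1 := by
      have h1 : Filter.Tendsto (fun j => ‖(u ∘ ψ2) j‖) Filter.atTop (𝓝 ‖Lu‖) :=
        (continuous_norm.tendsto Lu).comp hLu
      have h2 : Filter.Tendsto (fun j => ‖(u ∘ ψ2) j‖) Filter.atTop (𝓝 1) :=
        tendsto_const_nhds.congr fun j => (hunorm (ψ2 j)).symm
      exact tendsto_nhds_unique h1 h2
    rw [hLu0] at hone
    simp at hone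
  obtain ⟨C, hC⟩ := hbound
  obtain ⟨Lb, -, ψ2, hψ2, hLb⟩ := tendsto_subseq_of_bounded
    (Metric.isBounded_closedBall (x := (0 : Mul7 n P Q)) (r := C)) (x := V)
    (fun m => by simpa [Metric.mem_closedBall, dist_zero_right] using hC m)
  have hσ : StrictMono (fun j => φ1 (ψ2 j)) := hφ1.comp hψ2
  have hXσ : Filter.Tendsto (fun j => X (φ1 (ψ2 j))) Filter.atTop (𝓝 xb) :=
    hX.comp hσ.tendsto_atTop
  have hYσ : Filter.Tendsto (fun j => Y (φ1 (ψ2 j))) Filter.atTop (𝓝 yb) :=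
    hY.comp hσ.tendsto_atTop
  have hfacts2 : ∀ j, seqFacts D (t (φ1 (ψ2 j))) (X (φ1 (ψ2 j))) (Y (φ1 (ψ2 j)))
      ((V ∘ ψ2) j) := fun j => hVfacts (ψ2 j)
  have hNσ : ∀ i, (∀ j, Y (φ1 (ψ2 j)) i = 0) ∨ (∀ j, Y (φ1 (ψ2 j)) i ≠ 0) :=
    fun i => (Npat1 i).imp (fun h j => h _) (fun h j => h _)
  have hlimf := limit_facts D (fun j => htpos (φ1 (ψ2 j))) hXσ hYσ hfeasb hNσ hLb hfacts2
  have hL1 : Filter.Tendsto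
      (fun j => ((grad D.f (X (φ1 (ψ2 j))), D.c) : Vec n × Vec n)) Filter.atTop
      (𝓝 ((grad D.f xb, D.c) : Vec n × Vec n)) :=
    (((grad_continuous D.hf).tendsto xb).comp hXσ).prodMk_nhds tendsto_const_nhds
  have hL2 : Filter.Tendsto (fun j => comb D (X (φ1 (ψ2 j))) ((V ∘ ψ2) j))
      Filter.atTop (𝓝 (comb D xb Lb)) := comb_tendsto D hXσ hLb
  have hfinaleq : ((grad D.f xb, D.c) : Vec n × Vec n) = comb D xb Lb :=
    tendsto_nhds_unique (hL1.congr fun j => hVeq (ψ2 j)) hL2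
  exact ⟨ψ0 ∘ ψ2, V ∘ ψ2, Lb, hψ0.comp hψ2, hfacts2, fun k => hVeq (ψ2 k), hLb,
    hlimf, hfinaleq⟩

end Aux

/-- Lemma 3d: if KKT points of S(t_k) converge to a
nondegenerate T-stationary point of R, then eventually
N(y^k) ⊆ a10(x̄,ȳ) ⊆ N(y^k) ∪ H(x^k,y^k). -/
theorem statement13 {n : ℕ} {P Q : Type*} [Fintype P] [Fintype Q]
    (D : Setting n P Q) (t : ℕ → ℝ) (htpos : ∀ k, 0 < t k)
    (ht0 : Filter.Tendsto t Filter.atTop (nhds 0))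
    (X Y : ℕ → Vec n) (hK : ∀ k, KKT D (t k) (X k) (Y k))
    (xb yb : Vec n)
    (hconv : Filter.Tendsto (fun k => ((X k, Y k) : Vec n × Vec n))
      Filter.atTop (nhds (xb, yb)))
    (Mb : TMult n P Q) (hnd : NondegTStatAt D xb yb Mb) :
    ∃ K : ℕ, ∀ k ≥ K,
      Nact (Y k) ⊆ a10 xb yb ∧
      a10 xb yb ⊆ Nact (Y k) ∪ Hact (t k) (X k) (Y k) := by
  classical
  obtain ⟨hT, hlicq, hmu1pos, hmu2pos, hmu3pos, hrho, hnd4⟩ := hnd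
  have hfeasb : feasR D xb yb := hT.1
  have hX : Filter.Tendsto X Filter.atTop (𝓝 xb) := (continuous_fst.tendsto _).comp hconv
  have hY : Filter.Tendsto Y Filter.atTop (𝓝 yb) := (continuous_snd.tendsto _).comp hconv
  have hYi : ∀ i, Filter.Tendsto (fun k => Y k i) Filter.atTop (𝓝 (yb i)) :=
    fun i => ((continuous_apply i).tendsto yb).comp hY
  by_contra hcon
  push_neg at hcon
  have hfreq : ∃ᶠ k in Filter.atTop,
      ¬(Nact (Y k) ⊆ a10 xb yb ∧
        a10 xb yb ⊆ Nact (Y k) ∪ Hact (t k) (X k) (Y k)) := by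
    rw [Filter.frequently_atTop]
    intro K
    obtain ⟨k, hk1, hk2⟩ := hcon K
    exact ⟨k, hk1, by tauto⟩
  have hfreq2 : ∃ᶠ k in Filter.atTop, ∃ i : Fin n,
      ((Y k i = 0 ∧ i ∉ a10 xb yb) ∨
       (i ∈ a10 xb yb ∧ (Y k i ≠ 0 ∧ X k i * Y k i ≠ -(t k) ∧ X k i * Y k i ≠ t k))) := by
    refine hfreq.mono ?_
    intro k hk
    rw [not_and_or] at hk
    rcases hk with h | h
    · obtain ⟨i, hi1, hi2⟩ := Finset.not_subset.mp h
      exact ⟨i, Or.inl ⟨mem_Nact_iff.mp hi1, hi2⟩⟩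
    · obtain ⟨i, hi1, hi2⟩ := Finset.not_subset.mp h
      rw [Finset.mem_union, not_or] at hi2
      have h2 := hi2.2
      rw [Hact, Finset.mem_union, not_or] at h2
      refine ⟨i, Or.inr ⟨hi1, fun h0 => hi2.1 (mem_Nact_iff.mpr h0),
        fun h0 => h2.1 (mem_Hge_iff.mpr (by rw [h0])),
        fun h0 => h2.2 (mem_Hle_iff.mpr h0)⟩⟩
  obtain ⟨i, hi⟩ : ∃ i : Fin n, ∃ᶠ k in Filter.atTop,
      ((Y k i = 0 ∧ i ∉ a10 xb yb) ∨
       (i ∈ a10 xb yb ∧ (Y k i ≠ 0 ∧ X k i * Y k i ≠ -(t k) ∧ X k i * Y k i ≠ t k))) := by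
    by_contra hcc
    push_neg at hcc
    have hev : ∀ᶠ k in Filter.atTop, ∀ i : Fin n,
        ¬((Y k i = 0 ∧ i ∉ a10 xb yb) ∨
          (i ∈ a10 xb yb ∧ (Y k i ≠ 0 ∧ X k i * Y k i ≠ -(t k) ∧ X k i * Y k i ≠ t k))) :=
      Filter.eventually_all.mpr fun i => (hcc i).mono fun k hk h => by tauto
    obtain ⟨k, hk1, hk2⟩ := (hfreq2.and_eventually hev).exists
    obtain ⟨i, hi⟩ := hk1
    exact hk2 i hi
  rcases Filter.frequently_or_distrib.mp hi with hA | hB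
  · -- Case 1: i is frequently in N(y^k) but not in a10
    obtain ⟨φ, hφ, hPk⟩ := Filter.extraction_of_frequently_atTop hA
    have hyb0 : yb i = 0 :=
      lim_of_eventually_zero ((hYi i).comp hφ.tendsto_atTop)
        (Filter.Eventually.of_forall fun m => (hPk m).1)
    have hxb0 : xb i = 0 := by
      by_contra hx
      exact (hPk 0).2 (mem_a10_iff.mpr ⟨hx, hyb0⟩)
    have hia00 : i ∈ a00 xb yb := mem_a00_iff.mpr ⟨hxb0, hyb0⟩
    have hia10 : i ∉ a10 xb yb := (hPk 0).2
    obtain ⟨ψ, LS, Lb, hψ, hfacts, heqs, hLS, hlimf, heqb⟩ :=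
      engine D t htpos X Y hK xb yb hX hY hfeasb hlicq φ hφ
    set LM : Mul7 n P Q := tmul D xb yb Mb with hLMdef
    have hMeq : ((grad D.f xb, D.c) : Vec n × Vec n) = comb D xb LM :=
      tstat_comb D xb yb Mb hT.2.2.2.2.2.2
    have hdiff : comb D xb (Lb - LM) = 0 := by
      rw [comb_sub, ← heqb, ← hMeq, sub_self]
    have hd1 : ∀ q, D.g q xb ≠ 0 → (Lb - LM).2.1 q = 0 := by
      intro q hq
      have e1 := hlimf.1 q hq
      have e2 : LM.2.1 q = 0 := by
        simp only [hLMdef, tmul]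
        rw [if_neg (fun h0 => hq (mem_Q0_iff.mp h0))]
      simp only [Prod.snd_sub, Prod.fst_sub, Pi.sub_apply, e1, e2, sub_zero]
    have hd2 : ∀ j, yb j ≠ 1 + D.ε → (Lb - LM).2.2.1 j = 0 := by
      intro j hj
      have e1 := hlimf.2.1 j hj
      have e2 : LM.2.2.1 j = 0 := by
        simp only [hLMdef, tmul]
        rw [if_neg (fun h0 => hj (mem_Eact_iff.mp h0))]
      simp only [Prod.snd_sub, Prod.fst_sub, Pi.sub_apply, e1, e2, sub_zero]
    have hd3 : (∑ j, yb j) ≠ (n : ℝ) - D.s → (Lb - LM).2.2.2.1 = 0 := by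
      intro hne
      have e1 := hlimf.2.2.1 hne
      have e2 : LM.2.2.2.1 = 0 := by
        have hc := hT.2.2.2.2.1
        rcases mul_eq_zero.mp hc with h | h
        · exact h
        · exact absurd (by linarith [sub_eq_zero.mp h]) hne
      simp only [Prod.snd_sub, Prod.fst_sub, e1, e2, sub_zero]
    have hLMa : ∀ j, LM.2.2.2.2.1 j * xb j = 0 := by
      intro j
      by_cases hx : xb j = 0
      · rw [hx, mul_zero]
      · have e1 : LM.2.2.2.2.1 j = 0 := by
          simp only [hLMdef, tmul]
          rw [if_neg (fun h0 => hx (mem_a01_iff.mp h0).1),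
            if_neg (fun h0 => hx (mem_a00_iff.mp h0).1), add_zero]
        rw [e1, zero_mul]
    have hLMb : ∀ j, LM.2.2.2.2.2.1 j * yb j = 0 := by
      intro j
      by_cases hy : yb j = 0
      · rw [hy, mul_zero]
      · have e1 : LM.2.2.2.2.2.1 j = 0 := by
          simp only [hLMdef, tmul]
          rw [if_neg (fun h0 => hy (mem_a00_iff.mp h0).2)]
        rw [e1, zero_mul]
    have hd4 : ∀ j, (Lb - LM).2.2.2.2.1 j * xb j = (Lb - LM).2.2.2.2.2.1 j * yb j := by
      intro j
      have e1 := hlimf.2.2.2.1 j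
      simp only [Prod.snd_sub, Prod.fst_sub, Pi.sub_apply, sub_mul]
      rw [hLMa j, hLMb j, e1]
    have hd5 : ∀ j, yb j ≠ 0 → (Lb - LM).2.2.2.2.2.2 j = 0 := by
      intro j hj
      have e1 := hlimf.2.2.2.2.1 j hj
      have e2 : LM.2.2.2.2.2.2 j = 0 := by
        simp only [hLMdef, tmul]
        rw [if_neg (fun h0 => hj (mem_a10_iff.mp h0).2)]
      simp only [Prod.snd_sub, Prod.fst_sub, Pi.sub_apply, e1, e2, sub_zero]
    obtain ⟨d1, d2, d3, d4, d5, d6⟩ :=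
      licq_consequence D hfeasb hlicq (Lb - LM) hd1 hd2 hd3 hd4 hd5 hdiff
    have hd6i := d6 i
    simp only [Prod.snd_sub, Prod.fst_sub, Pi.sub_apply] at hd6i
    have hLMbi : LM.2.2.2.2.2.1 i = Mb.rho2 i := by
      simp only [hLMdef, tmul]
      rw [if_pos hia00]
    have hLMnui : LM.2.2.2.2.2.2 i = 0 := by
      simp only [hLMdef, tmul]
      rw [if_neg hia10]
    have hLbbi : Lb.2.2.2.2.2.1 i = 0 := by
      refine lim_of_eventually_zero ((tendsto_mul7 hLS).2.2.2.2.2.1 i)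
        (Filter.Eventually.of_forall fun k => ?_)
      refine ((hfacts k).2.2.2.2.2.2.2.2.1 i ?_).2
      rw [(hPk (ψ k)).1, mul_zero]
      have := htpos (φ (ψ k))
      constructor
      · intro h0; linarith [h0]
      · intro h0; linarith [h0]
    have hLbnui : 0 ≤ Lb.2.2.2.2.2.2 i := hlimf.2.2.2.2.2.2.2.1 i
    have hrho2 : Mb.rho2 i < 0 := (hrho i hia00).2
    rw [hLMbi, hLMnui, hLbbi] at hd6i
    linarith
  · -- Case 2: i ∈ a10 but frequently neither in N nor in H
    obtain ⟨φ, hφ, hPk⟩ := Filter.extraction_of_frequently_atTop hB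
    have hia10 : i ∈ a10 xb yb := (hPk 0).1
    obtain ⟨hxbne, hyb0⟩ := mem_a10_iff.mp hia10
    obtain ⟨ψ, LS, Lb, hψ, hfacts, heqs, hLS, hlimf, heqb⟩ :=
      engine D t htpos X Y hK xb yb hX hY hfeasb hlicq φ hφ
    obtain ⟨hlam, hmu1, hmu2, hmu3, ha, hb, hnu⟩ := tendsto_mul7 hLS
    have hσmono : StrictMono (fun k => φ (ψ k)) := hφ.comp hψ
    have hYσ : ∀ j, Filter.Tendsto (fun k => Y (φ (ψ k)) j) Filter.atTop (𝓝 (yb j)) :=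
      fun j => (hYi j).comp hσmono.tendsto_atTop
    have hck : ∀ k j, D.c j = -(LS k).2.2.1 j + (LS k).2.2.2.1
        + ((LS k).2.2.2.2.2.1 j + (LS k).2.2.2.2.2.2 j) := by
      intro k j
      have h1 := congrFun (congrArg Prod.snd (heqs k)) j
      rw [comb_snd] at h1
      exact h1
    -- at index i: b = 0, ν = 0 for all k; μ2 eventually 0
    have hbk : ∀ k, (LS k).2.2.2.2.2.1 i = 0 := by
      intro k
      exact ((hfacts k).2.2.2.2.2.2.2.2.1 i ⟨(hPk (ψ k)).2.2.1, (hPk (ψ k)).2.2.2⟩).2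
    have hνk : ∀ k, (LS k).2.2.2.2.2.2 i = 0 :=
      fun k => (hfacts k).2.2.2.2.2.2.2.2.2.1 i (hPk (ψ k)).2.1
    have hyne : yb i ≠ 1 + D.ε := by
      rw [hyb0]; intro h0; linarith [D.hεpos, h0.symm]
    have hμ2ev : ∀ᶠ k in Filter.atTop, (LS k).2.2.1 i = 0 := by
      filter_upwards [(hYσ i).eventually_ne hyne] with k hk
      exact (hfacts k).2.2.1 i hk
    have hμ3ev : ∀ᶠ k in Filter.atTop, (LS k).2.2.2.1 = D.c i := by
      filter_upwards [hμ2ev] with k hk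
      have h1 := hck k i
      rw [hk, hbk k, hνk k] at h1
      linarith [h1]
    have hμ3lim : Lb.2.2.2.1 = D.c i := by
      refine tendsto_nhds_unique hmu3 (tendsto_const_nhds.congr' ?_)
      filter_upwards [hμ3ev] with k hk
      exact hk.symm
    have hcipos : 0 < D.c i := D.hcpos i
    have hsumev : ∀ᶠ k in Filter.atTop, (∑ j, Y (φ (ψ k)) j) = (n : ℝ) - D.s := by
      filter_upwards [hμ3ev] with k hk
      have hc := (hfacts k).2.2.2.2.2.1
      rw [hk] at hc
      rcases mul_eq_zero.mp hc with h | h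
      · exact absurd h (ne_of_gt hcipos)
      · linarith [sub_eq_zero.mp h]
    have hsum : (∑ j, yb j) = (n : ℝ) - D.s := by
      have h1 : Filter.Tendsto (fun k => ∑ j, Y (φ (ψ k)) j) Filter.atTop
          (𝓝 (∑ j, yb j)) := tendsto_finset_sum _ fun j _ => hYσ j
      refine tendsto_nhds_unique h1 (tendsto_const_nhds.congr' ?_)
      filter_upwards [hsumev] with k hk
      exact hk.symm
    obtain ⟨j, hj01, hjE⟩ := exists_a01_not_E D hfeasb hsum
    obtain ⟨hxbj, hybjpos⟩ := mem_a01_iff.mp hj01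
    have hybjne : yb j ≠ 0 := ne_of_gt hybjpos
    -- limit of the scalar equation at index j
    have hμ2jev : ∀ᶠ k in Filter.atTop, (LS k).2.2.1 j = 0 := by
      filter_upwards [(hYσ j).eventually_ne hjE] with k hk
      exact (hfacts k).2.2.1 j hk
    have hνjev : ∀ᶠ k in Filter.atTop, (LS k).2.2.2.2.2.2 j = 0 := by
      filter_upwards [(hYσ j).eventually_ne hybjne] with k hk
      exact (hfacts k).2.2.2.2.2.2.2.2.2.1 j hk
    have hLbbj : Lb.2.2.2.2.2.1 j = 0 := by
      have h4 := hlimf.2.2.2.1 j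
      rw [hxbj, mul_zero] at h4
      rcases mul_eq_zero.mp h4.symm with h | h
      · exact h
      · exact absurd h hybjne
    have hμ2jlim : Lb.2.2.1 j = 0 :=
      lim_of_eventually_zero (hmu2 j) hμ2jev
    have hνjlim : Lb.2.2.2.2.2.2 j = 0 :=
      lim_of_eventually_zero (hnu j) hνjev
    have hlimrhs : Filter.Tendsto
        (fun k => -(LS k).2.2.1 j + (LS k).2.2.2.1
          + ((LS k).2.2.2.2.2.1 j + (LS k).2.2.2.2.2.2 j)) Filter.atTop
        (𝓝 (-(Lb.2.2.1 j) + Lb.2.2.2.1 + (Lb.2.2.2.2.2.1 j + Lb.2.2.2.2.2.2 j))) :=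
      (((hmu2 j).neg.add hmu3).add ((hb j).add (hnu j)))
    have hcj : D.c j = -(Lb.2.2.1 j) + Lb.2.2.2.1 + (Lb.2.2.2.2.2.1 j + Lb.2.2.2.2.2.2 j) := by
      refine tendsto_nhds_unique (tendsto_const_nhds.congr fun k => hck k j) hlimrhs
    rw [hμ2jlim, hLbbj, hνjlim, hμ3lim] at hcj
    have hcji : D.c j = D.c i := by rw [hcj]; ring
    have hji : j = i := D.hcinj hcji
    rw [hji] at hxbj
    exact hxbne hxbj

end Scholtes
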